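/- Fix c, β ∈ (0, π). Let I ⊆ (0, π) be an open interval and b, γ : I → (0, π) functions such that for every a ∈ I: cos(b(a)) = cos c · cos a + sin c · sin a · cos β, and cos c = cos a · cos(b(a)) + sin a · sin(b(a)) · cos(γ(a)). Then b is differentiable on I with b′(a) = cos(γ(a)) for every a ∈ I. -/

import Mathlib

open Real Set

/-- Spherical trigonometry: with `c, β` fixed and `b`, `γ` the side and angle
determined by the cosine laws as functions of the side `a`,
one has `∂b/∂a = cos γ`. -/
theorem stmt_6 (c β : ℝ) (hc : c ∈ Ioo 0 π) (hβ : β ∈ Ioo 0 π)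
    (lo hi : ℝ) (hI : Ioo lo hi ⊆ Ioo 0 π)
    (b γ : ℝ → ℝ)
    (hb : ∀ a ∈ Ioo lo hi, b a ∈ Ioo 0 π)
    (hγ : ∀ a ∈ Ioo lo hi, γ a ∈ Ioo 0 π)
    (law1 : ∀ a ∈ Ioo lo hi, cos (b a) = cos c * cos a + sin c * sin a * cos β)
    (law2 : ∀ a ∈ Ioo lo hi, cos c = cos a * cos (b a) + sin a * sin (b a) * cos (γ a)) :
    ∀ a ∈ Ioo lo hi, HasDerivAt b (cos (γ a)) a := by
  intro a ha
  set F : ℝ → ℝ := fun x => cos c * cos x + sin c * sin x * cos β with hF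
  have hba := hb a ha
  have haI := hI ha
  have hsinb : 0 < sin (b a) := Real.sin_pos_of_pos_of_lt_pi hba.1 hba.2
  have hsina : 0 < sin a := Real.sin_pos_of_pos_of_lt_pi haI.1 haI.2
  have hFa : F a = cos (b a) := (law1 a ha).symm
  -- F a ∈ (-1, 1)
  have hcosb1 : cos (b a) < 1 := by
    nlinarith [Real.sin_sq_add_cos_sq (b a), hsinb, Real.cos_le_one (b a)]
  have hcosb2 : -1 < cos (b a) := by
    nlinarith [Real.sin_sq_add_cos_sq (b a), hsinb, Real.neg_one_le_cos (b a)]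
  have hne1 : F a ≠ 1 := by rw [hFa]; exact ne_of_lt hcosb1
  have hnem1 : F a ≠ -1 := by rw [hFa]; exact ne_of_gt hcosb2
  -- derivative of F
  have hF' : HasDerivAt F (-(cos c * sin a) + sin c * cos a * cos β) a := by
    have h1 : HasDerivAt (fun x => cos c * cos x) (cos c * (-sin a)) a :=
      (Real.hasDerivAt_cos a).const_mul (cos c)
    have h2 : HasDerivAt (fun x => sin c * sin x * cos β) (sin c * cos a * cos β) a :=
      ((Real.hasDerivAt_sin a).const_mul (sin c)).mul_const (cos β)
    exact (h1.add h2).congr_deriv (by ring)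
  have harccos : HasDerivAt Real.arccos (-(1 / √(1 - (F a) ^ 2))) (F a) :=
    Real.hasDerivAt_arccos hnem1 hne1
  have hcomp : HasDerivAt (fun x => Real.arccos (F x))
      (-(1 / √(1 - (F a) ^ 2)) * (-(cos c * sin a) + sin c * cos a * cos β)) a :=
    harccos.comp a hF'
  have hsqrt : √(1 - (F a) ^ 2) = sin (b a) := by
    rw [hFa]
    have : 1 - cos (b a) ^ 2 = sin (b a) ^ 2 := by
      nlinarith [Real.sin_sq_add_cos_sq (b a)]
    rw [this, Real.sqrt_sq hsinb.le]
  -- b equals arccos ∘ F near a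
  have heq : (fun x => Real.arccos (F x)) =ᶠ[nhds a] b := by
    filter_upwards [isOpen_Ioo.mem_nhds ha] with x hx
    have hbx := hb x hx
    show Real.arccos (cos c * cos x + sin c * sin x * cos β) = b x
    rw [← law1 x hx]
    exact Real.arccos_cos hbx.1.le hbx.2.le
  have hderiv : HasDerivAt b
      (-(1 / √(1 - (F a) ^ 2)) * (-(cos c * sin a) + sin c * cos a * cos β)) a :=
    hcomp.congr_of_eventuallyEq heq.symm
  -- compute the value
  have hval : -(1 / √(1 - (F a) ^ 2)) * (-(cos c * sin a) + sin c * cos a * cos β)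
      = cos (γ a) := by
    rw [hsqrt]
    have h2 := law2 a ha
    have h1 := law1 a ha
    have key : cos (γ a) * sin (b a) = cos c * sin a - sin c * cos a * cos β := by
      apply mul_left_cancel₀ hsina.ne'
      linear_combination -(h2 + cos a * h1 + cos c * Real.sin_sq_add_cos_sq a)
    field_simp
    linarith [key]
  rwa [hval] at hderiv
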